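/- Three-point inequality for proximal minimization (Lemma 1, first part). Let X be a convex subset of a finite-dimensional real inner product space, f : X → ℝ a lower semicontinuous convex function, and d : X → ℝ a convex continuously differentiable function. If z minimizes Ψ(x) := f(x) + d(x) over X, then for every x ∈ X, Ψ(x) ≥ Ψ(z) + V(z,x), where V(z,x) = d(x) − d(z) − ⟨∇d(z), x − z⟩ is the Bregman divergence of d. -/

import Mathlib

open RealInnerProductSpace

/-- Lemma 1 (first part): three-point inequality for proximal minimization.
If `z` minimizes `Ψ = f + d` over the convex set `X`, with `f` lower
semicontinuous convex and `d` convex and continuously differentiable, then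
`Ψ(x) ≥ Ψ(z) + V(z,x)` for all `x ∈ X`, where
`V(z,x) = d(x) − d(z) − ⟨∇d(z), x − z⟩`. -/
theorem three_point_inequality
    {E : Type*} [NormedAddCommGroup E] [InnerProductSpace ℝ E] [FiniteDimensional ℝ E]
    (X : Set E) (hX : Convex ℝ X)
    (f d : E → ℝ)
    (hf_lsc : LowerSemicontinuousOn f X) (hf_conv : ConvexOn ℝ X f)
    (hd_conv : ConvexOn ℝ X d) (hd_smooth : ContDiff ℝ 1 d)
    (z : E) (hzX : z ∈ X)
    (hz : IsMinOn (fun x => f x + d x) X z) :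
    ∀ x ∈ X,
      f z + d z + (d x - d z - ⟪gradient d z, x - z⟫) ≤ f x + d x := by
  intro x hxX
  -- It suffices to show f z - f x ≤ ⟪∇d z, x - z⟫
  have key : f z - f x ≤ ⟪gradient d z, x - z⟫ := by
    set φ : ℝ → ℝ := fun t => d (z + t • (x - z)) with hφ
    have hdiff : DifferentiableAt ℝ d z := (hd_smooth.differentiable one_ne_zero) z
    have hgrad : HasGradientAt d (gradient d z) z := hdiff.hasGradientAt
    have hfd : HasFDerivAt d ((InnerProductSpace.toDual ℝ E) (gradient d z)) z :=
      hasGradientAt_iff_hasFDerivAt.mp hgrad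
    -- derivative of φ at 0
    have hline : HasDerivAt (fun t : ℝ => z + t • (x - z)) (x - z) 0 := by
      simpa using ((hasDerivAt_id (0:ℝ)).smul_const (x - z)).const_add z
    have hφ' : HasDerivAt φ ⟪gradient d z, x - z⟫ 0 := by
      have hfd0 : HasFDerivAt d ((InnerProductSpace.toDual ℝ E) (gradient d z))
          (z + (0:ℝ) • (x - z)) := by simpa using hfd
      have := hfd0.comp_hasDerivAt 0 hline
      rw [InnerProductSpace.toDual_apply_apply] at this
      exact this
    have hslope : Filter.Tendsto (slope φ 0) (nhdsWithin 0 (Set.Ioi 0))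
        (nhds ⟪gradient d z, x - z⟫) :=
      (hasDerivAt_iff_tendsto_slope.mp hφ').mono_left
        (nhdsWithin_mono 0 (fun t ht => ne_of_gt ht))
    refine ge_of_tendsto hslope ?_
    filter_upwards [Ioc_mem_nhdsGT_of_mem (Set.left_mem_Ico.mpr one_pos)] with t ht
    obtain ⟨ht0, ht1⟩ := ht
    have hxt : z + t • (x - z) ∈ X := by
      have h : (1 - t) • z + t • x = z + t • (x - z) := by
        simp [smul_sub, sub_smul]; abel
      rw [← h]
      exact hX hzX hxX (by linarith : (0:ℝ) ≤ 1 - t) ht0.le (by ring)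
    have hmin : f z + d z ≤ f (z + t • (x - z)) + d (z + t • (x - z)) := hz hxt
    have hconv : f (z + t • (x - z)) ≤ (1 - t) * f z + t * f x := by
      have h : (1 - t) • z + t • x = z + t • (x - z) := by
        simp [smul_sub, sub_smul]; abel
      have := hf_conv.2 hzX hxX (by linarith : (0:ℝ) ≤ 1 - t) ht0.le (by ring)
      rw [h] at this
      simpa using this
    have h1 : t * (f z - f x) ≤ φ t - φ 0 := by
      simp only [hφ, zero_smul, add_zero]
      nlinarith
    have h2 : slope φ 0 t = (φ t - φ 0) / t := by
      simp [slope_def_field]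
    rw [h2, le_div_iff₀ ht0]
    nlinarith
  linarith [key]
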